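/- Let f : [0,1] → [0,1] be continuous and consider the discrete-time dynamics π_{t+1} = f(π_t). The dynamics is equalizing — i.e., for all a, b ∈ [0,1], |f^t(a) − f^t(b)| → 0 as t → ∞ (where f^t denotes the t-th iterate) — if and only if f has a unique globally attracting equilibrium point, i.e., there exists π* ∈ [0,1] with f(π*) = π* and f^t(x) → π* as t → ∞ for every x ∈ [0,1]. -/
import Mathlib


open Filter Set Topology

/-- For a continuous self-map `f` of `[0,1]`, the discrete-time dynamics
`π_{t+1} = f(π_t)` is equalizing (any two trajectories approach each other) if and only if
`f` has a unique globally attracting equilibrium point. -/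
theorem equalizing_iff_unique_globally_attracting_equilibrium
    (f : ℝ → ℝ)
    (hc : ContinuousOn f (Set.Icc 0 1))
    (hmap : Set.MapsTo f (Set.Icc 0 1) (Set.Icc 0 1)) :
    (∀ a ∈ Set.Icc (0:ℝ) 1, ∀ b ∈ Set.Icc (0:ℝ) 1,
        Filter.Tendsto (fun t => |f^[t] a - f^[t] b|) Filter.atTop (nhds 0))
      ↔
    (∃! p : ℝ, p ∈ Set.Icc (0:ℝ) 1 ∧ f p = p ∧
        ∀ x ∈ Set.Icc (0:ℝ) 1,
          Filter.Tendsto (fun t => f^[t] x) Filter.atTop (nhds p)) := by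
  constructor
  · intro h
    -- find a fixed point by IVT on g x = f x - x
    have h0 : (0:ℝ) ∈ Set.Icc (0:ℝ) 1 := by norm_num
    have h1 : (1:ℝ) ∈ Set.Icc (0:ℝ) 1 := by norm_num
    have hg : ContinuousOn (fun x => f x - x) (Set.Icc 0 1) :=
      hc.sub continuousOn_id
    have hsub : Set.Icc (f 1 - 1) (f 0 - 0) ⊆ (fun x => f x - x) '' Set.Icc 0 1 :=
      intermediate_value_Icc' (by norm_num) hg
    have hz : (0:ℝ) ∈ Set.Icc (f 1 - 1) (f 0 - 0) := by
      constructor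
      · linarith [(hmap h1).2]
      · linarith [(hmap h0).1]
    obtain ⟨p, hp, hfp⟩ := hsub hz
    have hfix : f p = p := by
      have : f p - p = 0 := hfp
      linarith
    have hiter : ∀ t, f^[t] p = p := fun t => Function.iterate_fixed hfix t
    refine ⟨p, ⟨hp, hfix, ?_⟩, ?_⟩
    · intro x hx
      have := h x hx p hp
      simp only [hiter] at this
      have habs : Filter.Tendsto (fun t => f^[t] x - p) Filter.atTop (nhds 0) := by
        rwa [tendsto_zero_iff_abs_tendsto_zero]
      have := habs.add_const p
      simpa using this
    · rintro q ⟨hq, hfq, hconv⟩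
      have h1 := hconv p hp
      simp only [hiter] at h1
      exact (tendsto_const_nhds_iff.mp h1).symm
  · rintro ⟨p, ⟨hp, hfp, hconv⟩, -⟩ a ha b hb
    have := (hconv a ha).sub (hconv b hb)
    simpa using this.abs
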